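/- Let H be a 3-regular graph on 2n vertices and R(H) the graph obtained by subdividing each edge with 2t intermediate vertices. Then H has an independent set of size k if and only if R(H) has an independent set of size k + 3nt. -/

import Mathlib

open scoped Classical

/-- The graph obtained from `H` by replacing every edge `(u,v)` by a path with
`2*t` intermediate vertices. -/
def Subdiv {V : Type*} (H : SimpleGraph V) (t : ℕ) :
    SimpleGraph (V ⊕ (H.Dart × Fin t)) :=
  SimpleGraph.fromRel (fun a b =>
    match a, b with
    | Sum.inl u, Sum.inr (d, i) => u = d.fst ∧ i.val = 0
    | Sum.inr (d, i), Sum.inr (e, j) =>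
        (d = e ∧ j.val = i.val + 1) ∨ (e = d.symm ∧ i.val = t - 1 ∧ j.val = t - 1)
    | _, _ => False)

open Sum

section Aux

variable {V : Type*} {H : SimpleGraph V} {t : ℕ}

lemma subdiv_adj_inl_inl (u v : V) : ¬ (Subdiv H t).Adj (inl u) (inl v) := by
  simp [Subdiv, SimpleGraph.fromRel_adj]

lemma subdiv_adj_inl_inr (u : V) (d : H.Dart) (i : Fin t) :
    (Subdiv H t).Adj (inl u) (inr (d, i)) ↔ u = d.fst ∧ i.val = 0 := by
  simp [Subdiv, SimpleGraph.fromRel_adj]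

lemma subdiv_adj_inr_inr (d e : H.Dart) (i j : Fin t) :
    (Subdiv H t).Adj (inr (d, i)) (inr (e, j)) ↔ (d, i) ≠ (e, j) ∧
      (((d = e ∧ j.val = i.val + 1) ∨ (e = d.symm ∧ i.val = t - 1 ∧ j.val = t - 1)) ∨
       ((e = d ∧ i.val = j.val + 1) ∨ (d = e.symm ∧ j.val = t - 1 ∧ i.val = t - 1))) := by
  simp [Subdiv, SimpleGraph.fromRel_adj]

lemma aux_parity_count (t : ℕ) (b : ℕ) (hb : b ≤ 1) :
    ((Finset.univ : Finset (Fin t)).filter (fun i => i.val % 2 = b)).card +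
    ((Finset.univ : Finset (Fin t)).filter (fun i => i.val % 2 = 1 - b)).card = t := by
  classical
  have h : (Finset.univ : Finset (Fin t)).filter (fun i => i.val % 2 = 1 - b) =
      (Finset.univ : Finset (Fin t)).filter (fun i => ¬ (i.val % 2 = b)) := by
    apply Finset.filter_congr
    intro i _
    constructor <;> intro h <;> omega
  rw [h, Finset.card_filter_add_card_filter_not, Finset.card_univ, Fintype.card_fin]

lemma aux_no_consec (T : Finset ℕ) (a b : ℕ)
    (hsub : ∀ j ∈ T, a ≤ j ∧ j < b)
    (hcons : ∀ j ∈ T, j + 1 ∉ T) :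
    T.card ≤ (b - a + 1) / 2 := by
  have hinj : Set.InjOn (fun j => (j - a) / 2) T := by
    intro x hx y hy hxy
    by_contra hne
    have hx' := hsub x hx; have hy' := hsub y hy
    rcases Nat.lt_or_ge x y with h | h
    · have : y = x + 1 := by simp only at hxy; omega
      exact hcons x hx (this ▸ hy)
    · have : x = y + 1 := by simp only at hxy; omega
      exact hcons y hy (this ▸ hx)
  calc T.card = (T.image (fun j => (j - a) / 2)).card :=
        (Finset.card_image_of_injOn hinj).symm
    _ ≤ (Finset.range ((b - a + 1) / 2)).card := by
        apply Finset.card_le_card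
        intro m hm
        simp only [Finset.mem_image] at hm
        obtain ⟨j, hj, rfl⟩ := hm
        have := hsub j hj
        simp only [Finset.mem_range]
        omega
    _ = (b - a + 1) / 2 := Finset.card_range _

/-- Per-dart-pair counting bound. -/

lemma aux_dart_pair [Fintype V] [DecidableEq V] [DecidableRel H.Adj] (ht : 0 < t)
    (S : Finset (V ⊕ (H.Dart × Fin t)))
    (hind : ∀ u ∈ S, ∀ v ∈ S, ¬ (Subdiv H t).Adj u v) (d : H.Dart) :
    ((Finset.univ.filter (fun i : Fin t => inr (d, i) ∈ S)).card
      + (Finset.univ.filter (fun i : Fin t => inr (d.symm, i) ∈ S)).card)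
      + ((if inl d.fst ∈ S then 1 else 0) + (if inl d.snd ∈ S then 1 else 0)) ≤ t + 1 ∧
    (Finset.univ.filter (fun i : Fin t => inr (d, i) ∈ S)).card
      + (Finset.univ.filter (fun i : Fin t => inr (d.symm, i) ∈ S)).card ≤ t := by
  classical
  set U1 : Finset ℕ := if inl d.fst ∈ S then {0} else ∅ with hU1
  set U2 : Finset ℕ :=
    (Finset.univ.filter (fun i : Fin t => inr (d, i) ∈ S)).image (fun i => i.val + 1) with hU2
  set U3 : Finset ℕ :=
    (Finset.univ.filter (fun i : Fin t => inr (d.symm, i) ∈ S)).image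
      (fun i => 2 * t - i.val) with hU3
  set U4 : Finset ℕ := if inl d.snd ∈ S then {2 * t + 1} else ∅ with hU4
  have hmem1 : ∀ j, j ∈ U1 ↔ (j = 0 ∧ inl d.fst ∈ S) := by
    intro j; rw [hU1]; split_ifs with h <;> simp [h]
  have hmem2 : ∀ j, j ∈ U2 ↔ ∃ i : Fin t, inr (d, i) ∈ S ∧ j = i.val + 1 := by
    intro j; simp [hU2, eq_comm]
  have hmem3 : ∀ j, j ∈ U3 ↔ ∃ i : Fin t, inr (d.symm, i) ∈ S ∧ j = 2 * t - i.val := by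
    intro j; simp [hU3, eq_comm]
  have hmem4 : ∀ j, j ∈ U4 ↔ (j = 2 * t + 1 ∧ inl d.snd ∈ S) := by
    intro j; rw [hU4]; split_ifs with h <;> simp [h]
  -- no two consecutive elements in the union
  have hcons : ∀ j ∈ U1 ∪ U2 ∪ U3 ∪ U4, j + 1 ∉ U1 ∪ U2 ∪ U3 ∪ U4 := by
    intro j hj hj1
    simp only [Finset.mem_union, hmem1, hmem2, hmem3, hmem4] at hj hj1
    have hdsymm : d ≠ d.symm := (SimpleGraph.Dart.symm_ne d).symm
    rcases hj with ((h1 | h2) | h3) | h4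
    · rcases hj1 with ((g1 | g2) | g3) | g4
      · omega
      · obtain ⟨i, hiS, hi⟩ := g2
        have hi0 : i.val = 0 := by omega
        exact hind _ h1.2 _ hiS ((subdiv_adj_inl_inr _ _ _).2 ⟨rfl, hi0⟩)
      · obtain ⟨i, _, hi⟩ := g3
        have := i.isLt; omega
      · omega
    · obtain ⟨i, hiS, hi⟩ := h2
      have hit := i.isLt
      rcases hj1 with ((g1 | g2) | g3) | g4
      · omega
      · obtain ⟨i', hi'S, hi'⟩ := g2
        have hi't := i'.isLt
        have hv : i'.val = i.val + 1 := by omega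
        refine hind _ hiS _ hi'S ((subdiv_adj_inr_inr d d i i').2 ⟨?_, Or.inl (Or.inl ⟨rfl, hv⟩)⟩)
        intro hcon
        have : i = i' := by simpa using hcon
        omega
      · obtain ⟨i', hi'S, hi'⟩ := g3
        have hi't := i'.isLt
        have hv1 : i.val = t - 1 := by omega
        have hv2 : i'.val = t - 1 := by omega
        refine hind _ hiS _ hi'S ((subdiv_adj_inr_inr d d.symm i i').2
          ⟨?_, Or.inl (Or.inr ⟨rfl, hv1, hv2⟩)⟩)
        intro hcon
        rw [Prod.mk.injEq] at hcon
        exact hdsymm hcon.1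
      · omega
    · obtain ⟨i, hiS, hi⟩ := h3
      have hit := i.isLt
      rcases hj1 with ((g1 | g2) | g3) | g4
      · omega
      · obtain ⟨i', _, hi'⟩ := g2
        have hi't := i'.isLt
        omega
      · obtain ⟨i', hi'S, hi'⟩ := g3
        have hi't := i'.isLt
        have hv : i.val = i'.val + 1 := by omega
        refine hind _ hi'S _ hiS ((subdiv_adj_inr_inr d.symm d.symm i' i).2
          ⟨?_, Or.inl (Or.inl ⟨rfl, hv⟩)⟩)
        intro hcon
        have : i' = i := by simpa using hcon
        omega
      · have hv : i.val = 0 := by omega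
        refine hind _ g4.2 _ hiS ((subdiv_adj_inl_inr _ _ _).2 ⟨?_, hv⟩)
        simp
    · omega
  -- cardinalities
  have hc2 : U2.card = (Finset.univ.filter (fun i : Fin t => inr (d, i) ∈ S)).card := by
    rw [hU2]; apply Finset.card_image_of_injective
    intro a b hab
    have h' : a.val + 1 = b.val + 1 := hab
    exact Fin.val_injective (by omega)
  have hc3 : U3.card = (Finset.univ.filter (fun i : Fin t => inr (d.symm, i) ∈ S)).card := by
    rw [hU3]; apply Finset.card_image_of_injOn
    intro a ha b hb hab
    have := a.isLt; have := b.isLt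
    exact Fin.val_injective (by simp only at hab; omega)
  have hc1 : U1.card = (if inl d.fst ∈ S then 1 else 0) := by
    rw [hU1]; split_ifs <;> simp
  have hc4 : U4.card = (if inl d.snd ∈ S then 1 else 0) := by
    rw [hU4]; split_ifs <;> simp
  have hd12 : Disjoint U1 U2 := by
    rw [Finset.disjoint_left]; intro j h1 h2
    rw [hmem1] at h1; rw [hmem2] at h2
    obtain ⟨i, _, hi⟩ := h2; omega
  have hd13 : Disjoint U1 U3 := by
    rw [Finset.disjoint_left]; intro j h1 h2
    rw [hmem1] at h1; rw [hmem3] at h2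
    obtain ⟨i, _, hi⟩ := h2; have := i.isLt; omega
  have hd23 : Disjoint U2 U3 := by
    rw [Finset.disjoint_left]; intro j h1 h2
    rw [hmem2] at h1; rw [hmem3] at h2
    obtain ⟨i, _, hi⟩ := h1; obtain ⟨i', _, hi'⟩ := h2
    have := i.isLt; have := i'.isLt; omega
  have hd4 : Disjoint (U1 ∪ U2 ∪ U3) U4 := by
    rw [Finset.disjoint_left]; intro j h1 h2
    rw [hmem4] at h2
    simp only [Finset.mem_union, hmem1, hmem2, hmem3] at h1
    rcases h1 with (g1 | g2) | g3
    · omega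
    · obtain ⟨i, _, hi⟩ := g2; have := i.isLt; omega
    · obtain ⟨i, _, hi⟩ := g3; have := i.isLt; omega
  have hcard : (U1 ∪ U2 ∪ U3 ∪ U4).card = U1.card + U2.card + U3.card + U4.card := by
    rw [Finset.card_union_of_disjoint hd4, Finset.card_union_of_disjoint
      (Finset.disjoint_union_left.2 ⟨hd13, hd23⟩),
      Finset.card_union_of_disjoint hd12]
  constructor
  · -- with endpoints
    have hb := aux_no_consec (U1 ∪ U2 ∪ U3 ∪ U4) 0 (2 * t + 2) ?_ hcons
    · rw [hcard, hc1, hc2, hc3, hc4] at hb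
      omega
    · intro j hj
      simp only [Finset.mem_union, hmem1, hmem2, hmem3, hmem4] at hj
      rcases hj with ((g1 | g2) | g3) | g4
      · omega
      · obtain ⟨i, _, hi⟩ := g2; have := i.isLt; omega
      · obtain ⟨i, _, hi⟩ := g3; have := i.isLt; omega
      · omega
  · -- internal only
    have hcons' : ∀ j ∈ U2 ∪ U3, j + 1 ∉ U2 ∪ U3 := by
      intro j hj hj1
      refine hcons j ?_ ?_
      · simp only [Finset.mem_union] at hj ⊢; tauto
      · simp only [Finset.mem_union] at hj1 ⊢; tauto
    have hb := aux_no_consec (U2 ∪ U3) 1 (2 * t + 1) ?_ hcons'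
    · rw [Finset.card_union_of_disjoint hd23, hc2, hc3] at hb
      omega
    · intro j hj
      simp only [Finset.mem_union, hmem2, hmem3] at hj
      rcases hj with g2 | g3
      · obtain ⟨i, _, hi⟩ := g2; have := i.isLt; omega
      · obtain ⟨i, _, hi⟩ := g3; have := i.isLt; omega

lemma forward_dir {V : Type*} [Fintype V] [DecidableEq V]
    (H : SimpleGraph V) [DecidableRel H.Adj] (n t k : ℕ) (ht : 0 < t)
    (hcard : Fintype.card V = 2 * n) (hreg : H.IsRegularOfDegree 3)
    (s : Finset V) (hsk : s.card = k) (hind : ∀ u ∈ s, ∀ v ∈ s, ¬ H.Adj u v) :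
    ∃ S : Finset (V ⊕ (H.Dart × Fin t)), S.card = k + 3 * n * t ∧
      ∀ u ∈ S, ∀ v ∈ S, ¬ (Subdiv H t).Adj u v := by
  classical
  set ord : V → ℕ := fun v => ((Fintype.equivFin V) v : ℕ) with hord
  have hordinj : ∀ u v : V, ord u = ord v → u = v := by
    intro u v h
    exact (Fintype.equivFin V).injective (Fin.val_injective h)
  set p : H.Dart → ℕ := fun d =>
    if d.fst ∈ s then 1 else if d.snd ∈ s then 0
    else if ord d.fst < ord d.snd then 0 else 1 with hp
  have hple : ∀ d, p d ≤ 1 := by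
    intro d; simp only [hp]; split_ifs <;> omega
  have hpfst : ∀ d : H.Dart, d.fst ∈ s → p d = 1 := by
    intro d h; simp [hp, h]
  have hpsymm : ∀ d : H.Dart, p d.symm = 1 - p d := by
    intro d
    have hadj : H.Adj d.fst d.snd := d.adj
    have hne : d.fst ≠ d.snd := hadj.ne
    have hnb : ¬ (d.fst ∈ s ∧ d.snd ∈ s) := by
      rintro ⟨h1, h2⟩; exact hind _ h1 _ h2 hadj
    have hordne : ord d.fst ≠ ord d.snd := fun h => hne (hordinj _ _ h)
    simp only [hp, SimpleGraph.Dart.symm_toProd, Prod.fst_swap, Prod.snd_swap]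
    by_cases h1 : d.fst ∈ s
    · have h2 : d.snd ∉ s := fun h => hnb ⟨h1, h⟩
      simp [h1, h2]
    · by_cases h2 : d.snd ∈ s
      · simp [h1, h2]
      · simp only [h1, h2, if_false]
        split_ifs with h3 h4 <;> omega
  set cnt : ℕ → ℕ := fun b =>
    ((Finset.univ : Finset (Fin t)).filter (fun i => i.val % 2 = b)).card with hcnt
  set F : Finset (H.Dart × Fin t) :=
    Finset.univ.filter (fun di => di.2.val % 2 = p di.1) with hF
  set S : Finset (V ⊕ (H.Dart × Fin t)) := s.image inl ∪ F.image inr with hS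
  refine ⟨S, ?_, ?_⟩
  · -- cardinality
    have hdisj : Disjoint (s.image inl) (F.image inr : Finset (V ⊕ (H.Dart × Fin t))) := by
      simp only [Finset.disjoint_left, Finset.mem_image]
      rintro x ⟨u, _, rfl⟩ ⟨di, _, h⟩
      exact absurd h (by simp)
    rw [hS, Finset.card_union_of_disjoint hdisj,
      Finset.card_image_of_injective _ Sum.inl_injective,
      Finset.card_image_of_injective _ Sum.inr_injective, hsk]
    congr 1
    have hfib : F.card = ∑ d : H.Dart, cnt (p d) := by
      rw [Finset.card_eq_sum_card_fiberwise (f := Prod.fst) (t := Finset.univ)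
        (fun x _ => Finset.mem_univ _)]
      apply Finset.sum_congr rfl
      intro d _
      rw [show F.filter (fun x => x.1 = d)
          = ((Finset.univ : Finset (Fin t)).filter (fun i => i.val % 2 = p d)).image
              (fun i => (d, i)) by
        ext ⟨e, i⟩
        simp only [hF, Finset.mem_filter, Finset.mem_univ, true_and, Finset.mem_image,
          Prod.mk.injEq]
        constructor
        · rintro ⟨h1, rfl⟩; exact ⟨i, h1, rfl, rfl⟩
        · rintro ⟨j, hj, rfl, rfl⟩; exact ⟨hj, rfl⟩]
      rw [Finset.card_image_of_injective]
      intro a b hab; simpa using hab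
    have hcardD : Fintype.card H.Dart = 6 * n := by
      rw [SimpleGraph.dart_card_eq_sum_degrees]
      simp only [hreg _]
      rw [Finset.sum_const, Finset.card_univ, hcard]; ring
    have h2 : (∑ d : H.Dart, cnt (p d)) = ∑ d : H.Dart, cnt (p d.symm) := by
      exact Fintype.sum_equiv
        ((SimpleGraph.Dart.symm_involutive (G := H)).toPerm _)
        _ _ (fun d => by simp [Function.Involutive.toPerm])
    have h3 : ∀ d : H.Dart, cnt (p d) + cnt (p d.symm) = t := by
      intro d
      rw [hpsymm d]
      exact aux_parity_count t (p d) (hple d)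
    have h4 : 2 * (∑ d : H.Dart, cnt (p d)) = 2 * (3 * n * t) := by
      rw [two_mul]
      nth_rewrite 2 [h2]
      rw [← Finset.sum_add_distrib, Finset.sum_congr rfl (fun d _ => h3 d),
        Finset.sum_const, Finset.card_univ, hcardD, smul_eq_mul]
      ring
    rw [hfib]
    exact Nat.eq_of_mul_eq_mul_left (by norm_num) h4
  · -- independence
    intro x hx y hy hxy
    have hmem : ∀ z ∈ S, (∃ u ∈ s, z = inl u) ∨
        (∃ d : H.Dart, ∃ i : Fin t, i.val % 2 = p d ∧ z = inr (d, i)) := by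
      intro z hz
      simp only [hS, Finset.mem_union, Finset.mem_image] at hz
      rcases hz with ⟨u, hu, rfl⟩ | ⟨⟨d, i⟩, hdi, rfl⟩
      · exact Or.inl ⟨u, hu, rfl⟩
      · simp only [hF, Finset.mem_filter] at hdi
        exact Or.inr ⟨d, i, hdi.2, rfl⟩
    rcases hmem x hx with ⟨u, hu, rfl⟩ | ⟨d, i, hdi, rfl⟩
    · rcases hmem y hy with ⟨v, hv, rfl⟩ | ⟨e, j, hej, rfl⟩
      · exact subdiv_adj_inl_inl u v hxy
      · rw [subdiv_adj_inl_inr] at hxy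
        obtain ⟨rfl, hj0⟩ := hxy
        rw [hpfst e hu] at hej
        omega
    · rcases hmem y hy with ⟨v, hv, rfl⟩ | ⟨e, j, hej, rfl⟩
      · have hxy' := hxy.symm
        rw [subdiv_adj_inl_inr] at hxy'
        obtain ⟨rfl, hi0⟩ := hxy'
        rw [hpfst d hv] at hdi
        omega
      · rw [subdiv_adj_inr_inr] at hxy
        obtain ⟨hne, hrel⟩ := hxy
        rcases hrel with (⟨rfl, hji⟩ | ⟨rfl, hit, hjt⟩) | (⟨rfl, hij⟩ | ⟨rfl, hjt, hit⟩)
        · omega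
        · rw [hpsymm d] at hej
          have := hple d
          omega
        · omega
        · rw [hpsymm e] at hdi
          have := hple e
          omega

lemma backward_dir {V : Type*} [Fintype V] [DecidableEq V]
    (H : SimpleGraph V) [DecidableRel H.Adj] (n t k : ℕ) (ht : 0 < t)
    (hcard : Fintype.card V = 2 * n) (hreg : H.IsRegularOfDegree 3)
    (S : Finset (V ⊕ (H.Dart × Fin t))) (hSk : S.card = k + 3 * n * t)
    (hind : ∀ u ∈ S, ∀ v ∈ S, ¬ (Subdiv H t).Adj u v) :
    ∃ s : Finset V, s.card = k ∧ ∀ u ∈ s, ∀ v ∈ s, ¬ H.Adj u v := by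
  classical
  set ord : V → ℕ := fun v => ((Fintype.equivFin V) v : ℕ) with hord
  have hordinj : ∀ u v : V, ord u = ord v → u = v := by
    intro u v h
    exact (Fintype.equivFin V).injective (Fin.val_injective h)
  set s0 : Finset V := Finset.univ.filter (fun u => inl u ∈ S) with hs0
  set c : H.Dart → ℕ :=
    fun d => (Finset.univ.filter (fun i : Fin t => inr (d, i) ∈ S)).card with hc
  -- decomposition of S
  have hdecomp : S.card = s0.card + ∑ d : H.Dart, c d := by
    have hSeq : S = s0.image inl ∪
        (Finset.univ.filter (fun di : H.Dart × Fin t => inr di ∈ S)).image inr := by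
      ext x
      cases x with
      | inl u => simp [hs0]
      | inr di => simp
    have hdisj : Disjoint (s0.image inl)
        ((Finset.univ.filter (fun di : H.Dart × Fin t => inr di ∈ S)).image inr) := by
      simp only [Finset.disjoint_left, Finset.mem_image]
      rintro x ⟨u, _, rfl⟩ ⟨di, _, h⟩
      exact absurd h (by simp)
    rw [hSeq, Finset.card_union_of_disjoint hdisj,
      Finset.card_image_of_injective _ Sum.inl_injective,
      Finset.card_image_of_injective _ Sum.inr_injective]
    congr 1
    rw [Finset.card_eq_sum_card_fiberwise (f := Prod.fst) (t := Finset.univ)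
      (fun x _ => Finset.mem_univ _)]
    apply Finset.sum_congr rfl
    intro d _
    rw [show (Finset.univ.filter (fun di : H.Dart × Fin t => inr di ∈ S)).filter
        (fun x => x.1 = d)
        = ((Finset.univ : Finset (Fin t)).filter (fun i => inr (d, i) ∈ S)).image
            (fun i => (d, i)) by
      ext ⟨e, i⟩
      simp only [Finset.mem_filter, Finset.mem_univ, true_and, Finset.mem_image,
        Prod.mk.injEq]
      constructor
      · rintro ⟨h1, rfl⟩; exact ⟨i, h1, rfl, rfl⟩
      · rintro ⟨j, hj, rfl, rfl⟩; exact ⟨hj, rfl⟩]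
    rw [Finset.card_image_of_injective]
    intro a b hab; simpa using hab
  set bd : H.Dart → ℕ := fun d => if d.fst ∈ s0 ∧ d.snd ∈ s0 then 1 else 0 with hbd
  -- per-dart bound
  have hkey : ∀ d : H.Dart, c d + c d.symm + bd d ≤ t := by
    intro d
    obtain ⟨h1, h2⟩ := aux_dart_pair ht S hind d
    simp only [hc, hbd]
    by_cases hb : d.fst ∈ s0 ∧ d.snd ∈ s0
    · have e1 : inl d.fst ∈ S := by
        have := hb.1; rw [hs0] at this; simpa using this
      have e2 : inl d.snd ∈ S := by
        have := hb.2; rw [hs0] at this; simpa using this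
      rw [if_pos e1, if_pos e2] at h1
      rw [if_pos hb]
      omega
    · rw [if_neg hb]
      omega
  -- summation
  have hsum : 2 * (∑ d : H.Dart, c d) + (∑ d : H.Dart, bd d) ≤ 2 * (3 * n * t) := by
    have hcardD : Fintype.card H.Dart = 6 * n := by
      rw [SimpleGraph.dart_card_eq_sum_degrees]
      simp only [hreg _]
      rw [Finset.sum_const, Finset.card_univ, hcard]; ring
    have hre : (∑ d : H.Dart, c d) = ∑ d : H.Dart, c d.symm :=
      Fintype.sum_equiv ((SimpleGraph.Dart.symm_involutive (G := H)).toPerm _)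
        _ _ (fun d => by simp [Function.Involutive.toPerm])
    have h1 : (∑ d : H.Dart, (c d + c d.symm + bd d)) ≤ ∑ _d : H.Dart, t :=
      Finset.sum_le_sum (fun d _ => hkey d)
    rw [Finset.sum_add_distrib, Finset.sum_add_distrib, Finset.sum_const,
      Finset.card_univ, hcardD, smul_eq_mul] at h1
    rw [two_mul]
    nth_rewrite 2 [hre]
    have : 6 * n * t = 2 * (3 * n * t) := by ring
    omega
  -- the set A of bad darts with increasing ord
  set A : Finset H.Dart := Finset.univ.filter
    (fun d => d.fst ∈ s0 ∧ d.snd ∈ s0 ∧ ord d.fst < ord d.snd) with hA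
  have hbdA : (∑ d : H.Dart, bd d) = 2 * A.card := by
    set A' : Finset H.Dart := Finset.univ.filter
      (fun d => d.fst ∈ s0 ∧ d.snd ∈ s0 ∧ ord d.snd < ord d.fst) with hA'
    have hAA' : A'.card = A.card := by
      apply Finset.card_bij (fun d _ => d.symm)
      · intro d hd
        simp only [hA', Finset.mem_filter] at hd
        simp only [hA, Finset.mem_filter, SimpleGraph.Dart.symm_toProd,
          Prod.fst_swap, Prod.snd_swap]
        exact ⟨Finset.mem_univ _, hd.2.2.1, hd.2.1, hd.2.2.2⟩
      · intro a _ b _ hab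
        have := congrArg SimpleGraph.Dart.symm hab
        simpa using this
      · intro b hb
        refine ⟨b.symm, ?_, by simp⟩
        simp only [hA, Finset.mem_filter] at hb
        simp only [hA', Finset.mem_filter, SimpleGraph.Dart.symm_toProd,
          Prod.fst_swap, Prod.snd_swap]
        exact ⟨Finset.mem_univ _, hb.2.2.1, hb.2.1, hb.2.2.2⟩
    have hsplit : (∑ d : H.Dart, bd d) = A.card + A'.card := by
      have hcf : (∑ d : H.Dart, bd d)
          = (Finset.univ.filter (fun d : H.Dart => d.fst ∈ s0 ∧ d.snd ∈ s0)).card := by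
        rw [Finset.card_filter]
      rw [hcf]
      have hU : Finset.univ.filter (fun d : H.Dart => d.fst ∈ s0 ∧ d.snd ∈ s0) = A ∪ A' := by
        ext d
        have hne : ord d.fst ≠ ord d.snd := fun h => d.adj.ne (hordinj _ _ h)
        simp only [hA, hA', Finset.mem_filter, Finset.mem_union, Finset.mem_univ, true_and]
        constructor
        · rintro ⟨h1, h2⟩
          rcases Nat.lt_or_ge (ord d.fst) (ord d.snd) with h | h
          · exact Or.inl ⟨h1, h2, h⟩
          · exact Or.inr ⟨h1, h2, by omega⟩
        · rintro (⟨h1, h2, _⟩ | ⟨h1, h2, _⟩) <;> exact ⟨h1, h2⟩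
      rw [hU, Finset.card_union_of_disjoint]
      rw [Finset.disjoint_left]
      intro d h1 h2
      simp only [hA, hA', Finset.mem_filter] at h1 h2
      omega
    rw [hsplit, hAA']; ring
  -- conclude s0 is large
  have hs0large : k + A.card ≤ s0.card := by
    omega
  -- remove one endpoint of each bad edge
  set r : Finset V := A.image (fun d => d.fst) with hr
  set s1 : Finset V := s0 \ r with hs1
  have hs1card : k ≤ s1.card := by
    have h1 : r.card ≤ A.card := Finset.card_image_le
    have h2 : s0.card - r.card ≤ s1.card := Finset.le_card_sdiff r s0
    omega
  have hs1ind : ∀ u ∈ s1, ∀ v ∈ s1, ¬ H.Adj u v := by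
    intro u hu v hv hadj
    simp only [hs1, Finset.mem_sdiff] at hu hv
    have hne : u ≠ v := hadj.ne
    have hordne : ord u ≠ ord v := fun h => hne (hordinj _ _ h)
    rcases Nat.lt_or_ge (ord u) (ord v) with h | h
    · apply hu.2
      rw [hr]
      refine Finset.mem_image.2 ⟨⟨(u, v), hadj⟩, ?_, rfl⟩
      simp only [hA, Finset.mem_filter]
      exact ⟨Finset.mem_univ _, hu.1, hv.1, h⟩
    · apply hv.2
      rw [hr]
      refine Finset.mem_image.2 ⟨⟨(v, u), hadj.symm⟩, ?_, rfl⟩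
      simp only [hA, Finset.mem_filter]
      exact ⟨Finset.mem_univ _, hv.1, hu.1, by omega⟩
  obtain ⟨s', hs'sub, hs'card⟩ := Finset.exists_subset_card_eq hs1card
  exact ⟨s', hs'card, fun u hu v hv => hs1ind u (hs'sub hu) v (hs'sub hv)⟩

end Aux

/-- `H` 3-regular on `2n` vertices has an independent set of size `k` iff its
`2t`-subdivision has an independent set of size `k + 3nt`. -/
theorem subdiv_indepSet_iff {V : Type*} [Fintype V] [DecidableEq V]
    (H : SimpleGraph V) [DecidableRel H.Adj] (n t k : ℕ) (hn : 0 < n) (ht : 0 < t)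
    (hcard : Fintype.card V = 2 * n) (hreg : H.IsRegularOfDegree 3) :
    (∃ s : Finset V, s.card = k ∧ ∀ u ∈ s, ∀ v ∈ s, ¬ H.Adj u v) ↔
    (∃ S : Finset (V ⊕ (H.Dart × Fin t)), S.card = k + 3 * n * t ∧
      ∀ u ∈ S, ∀ v ∈ S, ¬ (Subdiv H t).Adj u v) := by
  constructor
  · rintro ⟨s, hs, hi⟩
    exact forward_dir H n t k ht hcard hreg s hs hi
  · rintro ⟨S, hS, hi⟩
    exact backward_dir H n t k ht hcard hreg S hS hi
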